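/- Let a > 0, M > 0. There is C > 0 such that for all t > 0, ∫_ℝ t^{-1/2} e^{-(y+at)²/(Mt)} (1+|y|)^{-1/2} dy ≤ C (1+t)^{-1/2}. -/

import Mathlib

open MeasureTheory Real

/-- rpow to sqrt conversion -/
lemma stmt12_rpow_eq {x : ℝ} (hx : 0 < x) : x ^ (-(1 : ℝ) / 2) = (Real.sqrt x)⁻¹ := by
  rw [show (-(1 : ℝ) / 2) = -(1 / 2) by ring, Real.rpow_neg hx.le, ← Real.sqrt_eq_rpow]

/-- key bound: u * exp(-(u^2/(2m^2))) ≤ m for u ≥ 0, m > 0 -/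
lemma stmt12_u_exp {m u : ℝ} (hm : 0 < m) (hu : 0 ≤ u) :
    u * Real.exp (-(u ^ 2 / (2 * m ^ 2))) ≤ m := by
  have h1 : Real.exp (-(u ^ 2 / (2 * m ^ 2))) ≤ (1 + u ^ 2 / (2 * m ^ 2))⁻¹ := by
    rw [Real.exp_neg]
    apply inv_anti₀ (by positivity)
    have := Real.add_one_le_exp (u ^ 2 / (2 * m ^ 2))
    linarith
  have h2 : u * Real.exp (-(u ^ 2 / (2 * m ^ 2))) ≤ u * (1 + u ^ 2 / (2 * m ^ 2))⁻¹ :=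
    mul_le_mul_of_nonneg_left h1 hu
  refine h2.trans ?_
  rw [← div_eq_mul_inv, div_le_iff₀ (by positivity)]
  have heq : m * (1 + u ^ 2 / (2 * m ^ 2)) - u = (u - m) ^ 2 / (2 * m) + m / 2 := by
    field_simp; ring
  have hnn : 0 ≤ (u - m) ^ 2 / (2 * m) := by positivity
  linarith [heq, hnn, hm]

/-- exp(-(u²/M)) (1+u) ≤ (1+√M) exp(-(u²/(2M))) -/
lemma stmt12_expbound {M u : ℝ} (hM : 0 < M) (hu : 0 ≤ u) :
    Real.exp (-(u ^ 2 / M)) * (1 + u) ≤ (1 + Real.sqrt M) * Real.exp (-(u ^ 2 / (2 * M))) := by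
  have hsplit : Real.exp (-(u ^ 2 / M)) =
      Real.exp (-(u ^ 2 / (2 * M))) * Real.exp (-(u ^ 2 / (2 * M))) := by
    rw [← Real.exp_add]; congr 1; field_simp; ring
  set E := Real.exp (-(u ^ 2 / (2 * M))) with hE
  have hE0 : 0 < E := Real.exp_pos _
  have hE1 : E ≤ 1 := Real.exp_le_one_iff.mpr (neg_nonpos_of_nonneg (by positivity))
  have huE : u * E ≤ Real.sqrt M := by
    have hm : 0 < Real.sqrt M := Real.sqrt_pos.mpr hM
    have hMm : M = (Real.sqrt M) ^ 2 := (Real.sq_sqrt hM.le).symm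
    have := stmt12_u_exp hm hu
    rw [← hMm] at this
    exact this
  rw [hsplit]
  nlinarith [hE0.le, huE, hE1]

set_option maxHeartbeats 1600000 in
theorem stmt12 (a M : ℝ) (ha : 0 < a) (hM : 0 < M) :
    ∃ C : ℝ, 0 < C ∧ ∀ t : ℝ, 0 < t →
      (∫ y : ℝ, t ^ (-(1 : ℝ) / 2) * Real.exp (-(y + a * t) ^ 2 / (M * t)) *
        (1 + |y|) ^ (-(1 : ℝ) / 2)) ≤ C * (1 + t) ^ (-(1 : ℝ) / 2) := by
  obtain ⟨c, hc, hc1, hc2, hc3⟩ : ∃ c : ℝ, 0 < c ∧ c ≤ 1 ∧ c ≤ a / 2 ∧ c ≤ a ^ 2 / 4 :=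
    ⟨min 1 (min (a / 2) (a ^ 2 / 4)),
      lt_min one_pos (lt_min (by positivity) (by positivity)),
      min_le_left _ _, (min_le_right _ _).trans (min_le_left _ _),
      (min_le_right _ _).trans (min_le_right _ _)⟩
  have hsc : 0 < Real.sqrt c := Real.sqrt_pos.mpr hc
  have hs2pm : 0 < Real.sqrt (2 * Real.pi * M) := Real.sqrt_pos.mpr (by positivity)
  refine ⟨(Real.sqrt c)⁻¹ * (1 + Real.sqrt M) * Real.sqrt (2 * Real.pi * M), by positivity, ?_⟩
  intro t ht
  set b : ℝ := 1 / (2 * M * t) with hbdef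
  have hb : 0 < b := by positivity
  have htp : 0 < 1 + t := by linarith
  set D : ℝ := t ^ (-(1 : ℝ) / 2) * (Real.sqrt c)⁻¹ * (1 + t) ^ (-(1 : ℝ) / 2) *
    (1 + Real.sqrt M) with hDdef
  -- pointwise bound
  have key : ∀ y : ℝ, t ^ (-(1 : ℝ) / 2) * Real.exp (-(y + a * t) ^ 2 / (M * t)) *
      (1 + |y|) ^ (-(1 : ℝ) / 2) ≤ D * Real.exp (-b * (y + a * t) ^ 2) := by
    intro y
    set z : ℝ := y + a * t with hzdef
    set u : ℝ := |z| / Real.sqrt t with hudef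
    have hst : 0 < Real.sqrt t := Real.sqrt_pos.mpr ht
    have hu0 : 0 ≤ u := by positivity
    have hu2 : u ^ 2 = z ^ 2 / t := by
      rw [hudef, div_pow, sq_abs, Real.sq_sqrt ht.le]
    have hexp1 : -z ^ 2 / (M * t) = -(u ^ 2 / M) := by rw [hu2]; ring
    have hexp2 : -b * z ^ 2 = -(u ^ 2 / (2 * M)) := by
      rw [hbdef, hu2]; ring
    have hyp : 0 < 1 + |y| := by positivity
    -- Step A : (1+|y|)^(-1/2) ≤ (√c)⁻¹ (1+t)^(-1/2) (1+u)
    have stepA : (1 + |y|) ^ (-(1 : ℝ) / 2) ≤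
        (Real.sqrt c)⁻¹ * (1 + t) ^ (-(1 : ℝ) / 2) * (1 + u) := by
      rw [stmt12_rpow_eq hyp, stmt12_rpow_eq htp]
      have hkey : c * (1 + t) ≤ (1 + |y|) * (1 + u) ^ 2 := by
        rcases le_or_gt (|z|) (a * t / 2) with hz | hz
        · -- inner region: |y| ≥ a t / 2
          have hy2 : a * t / 2 ≤ |y| := by
            have h0 : a * t - z = -y := by rw [hzdef]; ring
            have h1 := abs_sub_abs_le_abs_sub (a * t) z
            rw [h0, abs_neg, abs_of_pos (by positivity : (0:ℝ) < a * t)] at h1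
            linarith
          have h1 : c * (1 + t) ≤ 1 + |y| := by
            have h2 := mul_le_mul_of_nonneg_right hc2 ht.le
            linarith
          calc c * (1 + t) ≤ 1 + |y| := h1
            _ = (1 + |y|) * 1 := by ring
            _ ≤ (1 + |y|) * (1 + u) ^ 2 := by
                apply mul_le_mul_of_nonneg_left _ hyp.le
                nlinarith [hu0]
        · -- outer region: u² ≥ a² t / 4
          have hz2 : (a * t / 2) ^ 2 ≤ z ^ 2 := by
            rw [← sq_abs z]
            exact pow_le_pow_left₀ (by positivity) hz.le 2
          have hu2' : a ^ 2 * t / 4 ≤ u ^ 2 := by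
            rw [hu2, show a ^ 2 * t / 4 = (a * t / 2) ^ 2 / t by field_simp; ring]
            gcongr
          have h1 : c * (1 + t) ≤ (1 + u) ^ 2 := by
            have h2 := mul_le_mul_of_nonneg_right hc3 ht.le
            nlinarith [hu2', hu0]
          calc c * (1 + t) ≤ (1 + u) ^ 2 := h1
            _ = 1 * (1 + u) ^ 2 := by ring
            _ ≤ (1 + |y|) * (1 + u) ^ 2 := by
                apply mul_le_mul_of_nonneg_right _ (by positivity)
                linarith [abs_nonneg y]
      have hs : Real.sqrt c * Real.sqrt (1 + t) ≤ Real.sqrt (1 + |y|) * (1 + u) := by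
        have h1 : Real.sqrt (c * (1 + t)) ≤ Real.sqrt ((1 + |y|) * (1 + u) ^ 2) :=
          Real.sqrt_le_sqrt hkey
        rwa [Real.sqrt_mul hc.le, Real.sqrt_mul hyp.le, Real.sqrt_sq (by linarith)] at h1
      have hsy : 0 < Real.sqrt (1 + |y|) := Real.sqrt_pos.mpr hyp
      have hstp : 0 < Real.sqrt (1 + t) := Real.sqrt_pos.mpr htp
      have heq : (Real.sqrt c)⁻¹ * (Real.sqrt (1 + t))⁻¹ * (1 + u)
          = (1 + u) / (Real.sqrt c * Real.sqrt (1 + t)) := by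
        rw [div_eq_mul_inv, mul_inv]; ring
      rw [heq, inv_eq_one_div, div_le_div_iff₀ hsy (by positivity)]
      nlinarith [hs]
    -- Step B and combine
    have stepB : Real.exp (-(u ^ 2 / M)) * (1 + u) ≤
        (1 + Real.sqrt M) * Real.exp (-(u ^ 2 / (2 * M))) := stmt12_expbound hM hu0
    have ht0 : (0:ℝ) ≤ t ^ (-(1 : ℝ) / 2) := Real.rpow_nonneg ht.le _
    have htp0 : (0:ℝ) ≤ (1 + t) ^ (-(1 : ℝ) / 2) := Real.rpow_nonneg htp.le _
    calc t ^ (-(1 : ℝ) / 2) * Real.exp (-z ^ 2 / (M * t)) * (1 + |y|) ^ (-(1 : ℝ) / 2)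
        ≤ t ^ (-(1 : ℝ) / 2) * Real.exp (-z ^ 2 / (M * t)) *
          ((Real.sqrt c)⁻¹ * (1 + t) ^ (-(1 : ℝ) / 2) * (1 + u)) := by
          apply mul_le_mul_of_nonneg_left stepA
          positivity
      _ = t ^ (-(1 : ℝ) / 2) * (Real.sqrt c)⁻¹ * (1 + t) ^ (-(1 : ℝ) / 2) *
          (Real.exp (-(u ^ 2 / M)) * (1 + u)) := by
          rw [hexp1]; ring
      _ ≤ t ^ (-(1 : ℝ) / 2) * (Real.sqrt c)⁻¹ * (1 + t) ^ (-(1 : ℝ) / 2) *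
          ((1 + Real.sqrt M) * Real.exp (-(u ^ 2 / (2 * M)))) := by
          apply mul_le_mul_of_nonneg_left stepB
          positivity
      _ = D * Real.exp (-b * z ^ 2) := by rw [hexp2, hDdef]; ring
  -- integrability of the majorant
  have hgi : Integrable (fun y : ℝ => D * Real.exp (-b * (y + a * t) ^ 2)) :=
    ((integrable_exp_neg_mul_sq hb).comp_add_right (a * t)).const_mul D
  have hf0 : ∀ y : ℝ, 0 ≤ t ^ (-(1 : ℝ) / 2) * Real.exp (-(y + a * t) ^ 2 / (M * t)) *
      (1 + |y|) ^ (-(1 : ℝ) / 2) := by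
    intro y
    have h1 : (0:ℝ) ≤ t ^ (-(1 : ℝ) / 2) := Real.rpow_nonneg ht.le _
    have h2 : (0:ℝ) ≤ (1 + |y|) ^ (-(1 : ℝ) / 2) := Real.rpow_nonneg (by positivity) _
    positivity
  have hmono : (∫ y : ℝ, t ^ (-(1 : ℝ) / 2) * Real.exp (-(y + a * t) ^ 2 / (M * t)) *
      (1 + |y|) ^ (-(1 : ℝ) / 2)) ≤ ∫ y : ℝ, D * Real.exp (-b * (y + a * t) ^ 2) :=
    integral_mono_of_nonneg (Filter.Eventually.of_forall hf0) hgi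
      (Filter.Eventually.of_forall key)
  refine hmono.trans ?_
  -- compute the gaussian integral
  have hint : (∫ y : ℝ, D * Real.exp (-b * (y + a * t) ^ 2)) =
      D * Real.sqrt (Real.pi / b) := by
    rw [integral_const_mul]
    congr 1
    rw [integral_add_right_eq_self (fun x : ℝ => Real.exp (-b * x ^ 2)) (a * t)]
    exact integral_gaussian b
  rw [hint]
  have hpib : Real.pi / b = 2 * Real.pi * M * t := by
    rw [hbdef]; field_simp
  have hsqrt : Real.sqrt (2 * Real.pi * M * t) = Real.sqrt (2 * Real.pi * M) * Real.sqrt t := by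
    rw [Real.sqrt_mul (by positivity)]
  rw [hpib, hsqrt, hDdef, stmt12_rpow_eq ht]
  have hst : 0 < Real.sqrt t := Real.sqrt_pos.mpr ht
  apply le_of_eq
  field_simp
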